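/- With notation as in the tree-of-groups construction, a nonempty a ∈ G_n satisfies rk(a) = ∞ (lies on an infinite path in the derived tree on G) if and only if every element t ∈ a lies on an infinite path of T. -/

import Mathlib

open scoped symmDiff

/-- `RankGE succ o x` means the tree rank of `x` (w.r.t. successor relation `succ`)
is at least `o`; unranked nodes (`rk = ∞`) satisfy this for every ordinal. -/
def RankGE {α : Type*} (succ : α → α → Prop) (o : Ordinal) (x : α) : Prop :=
  ∀ β < o, ∃ y, succ x y ∧ RankGE succ β y
termination_by o

/-- `T` is a subtree of `ω^{<ω}`: closed under initial segments. -/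
def IsTree (T : Set (List ℕ)) : Prop := ∀ s t : List ℕ, s <+: t → t ∈ T → s ∈ T

/-- `τ` is an immediate successor of `σ` in `T`. -/
def TSucc (T : Set (List ℕ)) (σ τ : List ℕ) : Prop := τ ∈ T ∧ ∃ k : ℕ, τ = σ ++ [k]

instance : Std.Commutative (α := Finset (List ℕ)) (· ∆ ·) := ⟨fun a b => symmDiff_comm a b⟩
instance : Std.Associative (α := Finset (List ℕ)) (· ∆ ·) := ⟨fun a b c => symmDiff_assoc a b c⟩

/-- The predecessor map: the symmetric-difference sum of the singletons of the
`T`-predecessors of the members of `a`. -/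
def pmap (a : Finset (List ℕ)) : Finset (List ℕ) :=
  Finset.fold (· ∆ ·) ∅ (fun t => {t.dropLast}) a

/-- The carrier `G = ⋃ₙ Gₙ`: an element of `Gₙ` is a pair `(n, a)` with `a` a finite
subset of the level-`n` nodes of `T`; `(n, ∅)` is the identity `idₙ` of `Gₙ`. -/
def Gset (T : Set (List ℕ)) : Set (ℕ × Finset (List ℕ)) :=
  {x | ∀ t ∈ x.2, t ∈ T ∧ t.length = x.1}

/-- The derived tree structure on `G`: `y ∈ G_{n+1}` is a successor of `x ∈ Gₙ` iff `p y = x`. -/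
def Gsucc (T : Set (List ℕ)) (x y : ℕ × Finset (List ℕ)) : Prop :=
  y ∈ Gset T ∧ y.1 = x.1 + 1 ∧ pmap y.2 = x.2

/-- `t` lies on an infinite branch of `T`. -/
def Branch (T : Set (List ℕ)) (t : List ℕ) : Prop :=
  ∃ f : ℕ → ℕ, (∀ m, List.ofFn (fun i : Fin m => f i) ∈ T) ∧
    t = List.ofFn (fun i : Fin t.length => f i)

theorem rankGE_mono {α : Type*} {succ : α → α → Prop} {β γ : Ordinal} (h : γ ≤ β) {x : α}
    (hx : RankGE succ β x) : RankGE succ γ x := by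
  rw [RankGE] at hx ⊢
  exact fun δ hδ => hx δ (hδ.trans_le h)

theorem ofFn_succ_concat (f : ℕ → ℕ) (m : ℕ) :
    List.ofFn (fun i : Fin (m+1) => f i) = List.ofFn (fun i : Fin m => f i) ++ [f m] := by
  rw [List.ofFn_succ']
  simp [List.concat_eq_append]

theorem branch_ext {T : Set (List ℕ)} {t : List ℕ} (h : Branch T t) :
    ∃ k, (t ++ [k]) ∈ T ∧ Branch T (t ++ [k]) := by
  obtain ⟨f, hf, ht⟩ := h
  refine ⟨f t.length, ?_, f, hf, ?_⟩
  · have := hf (t.length + 1)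
    rwa [ofFn_succ_concat, ← ht] at this
  · rw [List.length_append, List.length_singleton, ofFn_succ_concat, ← ht]

theorem fold_singleton (a : Finset (List ℕ)) :
    Finset.fold (β := Finset (List ℕ)) (· ∆ ·) ∅ (fun t => {t}) a = a := by
  induction a using Finset.induction_on with
  | empty => simp
  | @insert x s hx ih =>
    have hd : ({x} : Finset (List ℕ)) ∆ s = {x} ⊔ s :=
      (symmDiff_eq_sup (a := ({x} : Finset (List ℕ))) (b := s)).mpr
        (Finset.disjoint_singleton_left.mpr hx)
    rw [Finset.fold_insert hx, ih, hd]
    simp [Finset.insert_eq, -Finset.singleton_union]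

theorem mem_pmap {b : Finset (List ℕ)} {t : List ℕ} (h : t ∈ pmap b) :
    ∃ s ∈ b, s.dropLast = t := by
  induction b using Finset.induction_on with
  | empty => simp [pmap] at h
  | @insert x s hx ih =>
    rw [pmap, Finset.fold_insert hx] at h
    rcases Finset.mem_symmDiff.mp h with ⟨h1, -⟩ | ⟨h1, -⟩
    · exact ⟨x, Finset.mem_insert_self _ _, (Finset.mem_singleton.mp h1).symm⟩
    · obtain ⟨s', hs', h⟩ := ih h1
      exact ⟨s', Finset.mem_insert_of_mem hs', h⟩

/-- Lemma B: rank in G bounds rank of each member in T. -/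
theorem rankGE_T_of_rankGE_G {T : Set (List ℕ)} (β : Ordinal) :
    ∀ (n : ℕ) (a : Finset (List ℕ)), RankGE (Gsucc T) β (n, a) →
      ∀ t ∈ a, RankGE (TSucc T) β t := by
  induction β using Ordinal.induction with
  | h β IH =>
    intro n a hr t ht
    rw [RankGE]
    intro γ hγ
    rw [RankGE] at hr
    obtain ⟨⟨m, b⟩, ⟨hbG, hm, hp⟩, hrb⟩ := hr γ hγ
    obtain ⟨s, hsb, hds⟩ := mem_pmap (by rw [hp]; exact ht)
    have hsT := hbG s hsb
    have hm' : m = n + 1 := hm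
    have hslen : s.length = n + 1 := by rw [← hm']; exact hsT.2
    have hsne : s ≠ [] := by
      intro h; rw [h] at hslen; simp at hslen
    refine ⟨s, ⟨hsT.1, s.getLast hsne, ?_⟩, IH γ hγ m b hrb s hsb⟩
    rw [← hds]
    exact (List.dropLast_append_getLast hsne).symm

/-- Lemma A: if every member of `a` lies on a branch, `(n,a)` has rank ≥ every ordinal. -/
theorem rankGE_G_of_branch {T : Set (List ℕ)} (β : Ordinal) :
    ∀ (n : ℕ) (a : Finset (List ℕ)),
      (∀ t ∈ a, t ∈ T ∧ t.length = n ∧ Branch T t) → RankGE (Gsucc T) β (n, a) := by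
  induction β using Ordinal.induction with
  | h β IH =>
    intro n a hinv
    rw [RankGE]
    intro γ hγ
    classical
    set g : List ℕ → List ℕ := fun t =>
      t ++ [if h : ∃ k, (t ++ [k]) ∈ T ∧ Branch T (t ++ [k]) then h.choose else 0] with hg
    have hgood : ∀ t ∈ a, (g t) ∈ T ∧ Branch T (g t) := by
      intro t ht
      have hex : ∃ k, (t ++ [k]) ∈ T ∧ Branch T (t ++ [k]) := branch_ext (hinv t ht).2.2
      simp only [hg, dif_pos hex]
      exact hex.choose_spec
    have hglen : ∀ t, (g t).length = t.length + 1 := by intro t; simp [hg]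
    have hgdrop : ∀ t, (g t).dropLast = t := by intro t; simp [hg]
    have hginj : ∀ x ∈ a, ∀ y ∈ a, g x = g y → x = y := by
      intro x _ y _ hxy
      have := congrArg List.dropLast hxy
      rwa [hgdrop, hgdrop] at this
    set b := a.image g with hb
    have hpb : pmap b = a := by
      rw [hb, pmap, Finset.fold_image hginj]
      have : ((fun t => ({t.dropLast} : Finset (List ℕ))) ∘ g) = fun t => {t} := by
        funext t; simp [hgdrop]
      rw [this, fold_singleton]
    have hbinv : ∀ s ∈ b, s ∈ T ∧ s.length = n + 1 ∧ Branch T s := by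
      intro s hs
      obtain ⟨t, ht, rfl⟩ := Finset.mem_image.mp hs
      exact ⟨(hgood t ht).1, by rw [hglen, (hinv t ht).2.1], (hgood t ht).2⟩
    refine ⟨(n + 1, b), ⟨fun s hs => ⟨(hbinv s hs).1, (hbinv s hs).2.1⟩, rfl, hpb⟩,
      IH γ hγ (n + 1) b (fun s hs => ⟨(hbinv s hs).1, (hbinv s hs).2.1, (hbinv s hs).2.2⟩)⟩

section LemmaC

variable (T : Set (List ℕ))

/-- the "is a child of" relation, reversed for Acc. -/
def Rrel (x y : List ℕ) : Prop := TSucc T y x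

theorem acc_not_rankGE {t : List ℕ} (h : Acc (Rrel T) t) :
    ∃ β, ¬ RankGE (TSucc T) β t := by
  induction h with
  | intro t _ ih =>
    classical
    set B : ℕ → Ordinal := fun k =>
      if h : TSucc T t (t ++ [k]) then (ih _ h).choose else 0 with hB
    refine ⟨Order.succ (⨆ k, B k), fun hr => ?_⟩
    rw [RankGE] at hr
    obtain ⟨s, hs, hrs⟩ := hr _ (Order.lt_succ _)
    obtain ⟨hsT, k, rfl⟩ := hs
    have hts : TSucc T t (t ++ [k]) := ⟨hsT, k, rfl⟩
    have hnot : ¬ RankGE (TSucc T) (B k) (t ++ [k]) := by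
      rw [hB]; simp only [dif_pos hts]; exact (ih _ hts).choose_spec
    exact hnot (rankGE_mono (Ordinal.le_iSup B k) hrs)

theorem branch_of_rankGE (hT : IsTree T) {t : List ℕ} (htT : t ∈ T)
    (h : ∀ β, RankGE (TSucc T) β t) : Branch T t := by
  classical
  have hnacc : ¬ Acc (Rrel T) t := by
    intro hacc
    obtain ⟨β, hβ⟩ := acc_not_rankGE T hacc
    exact hβ (h β)
  -- build an infinite chain
  have step : ∀ x : {x : List ℕ // ¬ Acc (Rrel T) x},
      ∃ y : {x : List ℕ // ¬ Acc (Rrel T) x}, TSucc T x.1 y.1 := by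
    rintro ⟨x, hx⟩
    by_contra hc
    push_neg at hc
    exact hx (Acc.intro x (fun y hy => by_contra fun hny => hc ⟨y, hny⟩ hy))
  choose F hF using step
  set c : ℕ → List ℕ := fun i => (F^[i] ⟨t, hnacc⟩).1 with hc
  have hc0 : c 0 = t := rfl
  have hcsucc : ∀ i, TSucc T (c i) (c (i + 1)) := by
    intro i
    have : F^[i+1] ⟨t, hnacc⟩ = F (F^[i] ⟨t, hnacc⟩) := Function.iterate_succ_apply' F i _
    rw [hc]; simp only [this]
    exact hF _
  have hcT : ∀ i, c i ∈ T := by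
    intro i
    cases i with
    | zero => exact hc0 ▸ htT
    | succ j => exact (hcsucc j).1
  have hpref : ∀ i, c i <+: c (i + 1) := by
    intro i
    obtain ⟨-, k, hk⟩ := hcsucc i
    exact ⟨[k], hk.symm⟩
  have hprefle : ∀ i j, i ≤ j → c i <+: c j := by
    intro i j hij
    induction j with
    | zero => rw [Nat.le_zero.mp hij]
    | succ j ihj =>
      rcases Nat.lt_or_ge i (j + 1) with hlt | hge
      · exact (ihj (Nat.lt_succ_iff.mp hlt)).trans (hpref j)
      · rw [Nat.le_antisymm hij hge]
  have hlen : ∀ i, (c i).length = t.length + i := by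
    intro i
    induction i with
    | zero => simp [hc0]
    | succ j ihj =>
      obtain ⟨-, k, hk⟩ := hcsucc j
      rw [hk, List.length_append, ihj]
      rfl
  set f : ℕ → ℕ := fun i => (c (i + 1)).getD i 0 with hf
  have key : ∀ m, List.ofFn (fun i : Fin m => f i) = (c m).take m := by
    intro m
    apply List.ext_getElem
    · simp [hlen m]
    · intro i h1 h2
      simp only [List.getElem_ofFn, List.getElem_take]
      have hilt : i < (c (i + 1)).length := by
        rw [hlen]; omega
      have him : i < m := by simpa using h1
      have hpf : c (i + 1) <+: c m := hprefle _ _ him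
      rw [hf]
      simp only [List.getD_eq_getElem _ _ hilt]
      exact hpf.getElem hilt
  refine ⟨f, fun m => ?_, ?_⟩
  · exact hT _ _ (key m ▸ List.take_prefix m (c m)) (hcT m)
  · rw [key t.length]
    have : t <+: c t.length := hc0 ▸ hprefle 0 t.length (Nat.zero_le _)
    exact List.prefix_iff_eq_take.mp this

end LemmaC

theorem stmt_6 (T : Set (List ℕ)) (hT : IsTree T) (n : ℕ) (a : Finset (List ℕ))
    (hne : a.Nonempty) (ha : ((n, a) : ℕ × Finset (List ℕ)) ∈ Gset T) :
    (∀ β : Ordinal, RankGE (Gsucc T) β (n, a)) ↔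
      ∀ t ∈ a, ∃ f : ℕ → ℕ, (∀ m, List.ofFn (fun i : Fin m => f i) ∈ T) ∧
        t = List.ofFn (fun i : Fin t.length => f i) := by
  constructor
  · intro h t ht
    exact branch_of_rankGE T hT (ha t ht).1
      (fun β => rankGE_T_of_rankGE_G β n a (h β) t ht)
  · intro h β
    exact rankGE_G_of_branch β n a (fun t ht => ⟨(ha t ht).1, (ha t ht).2, h t ht⟩)
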